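/- Under the hypotheses of the coefficient integral representation (polynomials $B_n$ with $c_2\sqrt{n}R^n \le |B_n| \le c_1\sqrt{n}R^n$ on a curve $L_R$ enclosing $0$, $R>1$, and $P_n = \sum_{k=0}^n a_k B_k$), one has the backward norm estimate $\|P_{n-1}\|_{L_R} \le C\,\|P_n\|_{L_R}$ for all large $n$, where $C = 1 + \frac{|L_R|}{2\pi d}\cdot\frac{c_1}{c_2}$ and $d = \min_{z\in L_R}|z|$. Consequently $\|P_{n-k}\|_{L_R} \le C^k \|P_n\|_{L_R}$ for $k \le n$. -/

import Mathlib

open Filter Polynomial intervalIntegral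

lemma pole_integral_zero (γ : ℝ → ℂ) (hγ : Differentiable ℝ γ) (hγ' : Continuous (deriv γ))
    (hclosed : γ 0 = γ (2 * Real.pi)) (z₀ : ℂ) (hz : ∀ t, γ t ≠ z₀)
    (k : ℕ) (hk : 1 ≤ k) :
    ∫ t in (0:ℝ)..(2 * Real.pi), deriv γ t / (γ t - z₀) ^ (k + 1) = 0 := by
  have hksub : ∀ t : ℝ, γ t - z₀ ≠ 0 := fun t => sub_ne_zero.mpr (hz t)
  have hkC : (k : ℂ) ≠ 0 := Nat.cast_ne_zero.mpr (by omega)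
  have hF : ∀ t : ℝ, HasDerivAt (fun s => -(k:ℂ)⁻¹ * ((γ s - z₀) ^ (k:ℕ))⁻¹)
      (deriv γ t / (γ t - z₀) ^ (k + 1)) t := by
    intro t
    have hγt : HasDerivAt γ (deriv γ t) t := (hγ t).hasDerivAt
    have h1 : HasDerivAt (fun s => γ s - z₀) (deriv γ t) t := hγt.sub_const z₀
    have h2 := hasDerivAt_zpow (-(k:ℤ)) (γ t - z₀) (Or.inl (hksub t))
    have h3 := (h2.comp t h1).const_mul (-(k:ℂ)⁻¹)
    have hfun : (fun y : ℝ => -(k:ℂ)⁻¹ * ((fun x : ℂ => x ^ (-(k:ℤ))) ∘ fun s => γ s - z₀) y)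
        = fun s : ℝ => -(k:ℂ)⁻¹ * ((γ s - z₀) ^ (k:ℕ))⁻¹ := by
      funext s
      simp [Function.comp, zpow_neg, zpow_natCast]
    rw [hfun] at h3
    have hval : -(k:ℂ)⁻¹ * ((↑(-(k:ℤ)) : ℂ) * (γ t - z₀) ^ ((-(k:ℤ)) - 1) * deriv γ t)
        = deriv γ t / (γ t - z₀) ^ (k + 1) := by
      have he : ((-(k:ℤ)) - 1 : ℤ) = -((k + 1 : ℕ) : ℤ) := by push_cast; ring
      rw [he, zpow_neg, zpow_natCast]
      push_cast
      field_simp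
    exact hval ▸ h3
  have hcont : Continuous fun t => deriv γ t / (γ t - z₀) ^ (k + 1) := by
    apply hγ'.div ((hγ.continuous.sub continuous_const).pow _)
    intro t
    exact pow_ne_zero _ (hksub t)
  rw [intervalIntegral.integral_eq_sub_of_hasDerivAt (fun t _ => hF t)
    (hcont.intervalIntegrable _ _)]
  rw [hclosed]
  ring

lemma resid_integral (γ : ℝ → ℂ) (hγ : Differentiable ℝ γ) (hγ' : Continuous (deriv γ))
    (hclosed : γ 0 = γ (2 * Real.pi))
    (Int : Set ℂ) (hcurve : ∀ t : ℝ, γ t ∉ Int)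
    (hwind1 : ∀ z ∈ Int,
      (1 / (2 * Real.pi * Complex.I)) *
        ∫ t in (0:ℝ)..(2 * Real.pi), deriv γ t / (γ t - z) = 1) :
    ∀ d : ℕ, ∀ D Q : Polynomial ℂ, D ≠ 0 → D.natDegree = d →
      (∀ z : ℂ, D.IsRoot z → z ∈ Int) → Q.degree < D.degree →
      ∫ t in (0:ℝ)..(2 * Real.pi), deriv γ t * Q.eval (γ t) / D.eval (γ t) =
        (2 * Real.pi * Complex.I) * (Q.coeff (d - 1) / D.leadingCoeff) := by
  intro d
  induction d using Nat.strong_induction_on with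
  | _ d ih =>
  intro D Q hD0 hDdeg hroots hQD
  rcases Nat.eq_zero_or_pos d with hd0 | hd1
  · subst hd0
    have hDdeg' : D.degree = 0 := by
      rw [degree_eq_natDegree hD0, hDdeg]; rfl
    have hQ : Q = 0 := by
      rw [hDdeg'] at hQD
      exact degree_eq_bot.mp (Nat.WithBot.lt_zero_iff.mp hQD)
    subst hQ
    simp
  · have hDdegpos : 0 < D.degree := by
      rw [degree_eq_natDegree hD0, hDdeg]; exact_mod_cast hd1
    obtain ⟨z₀, hz₀⟩ := Complex.exists_root hDdegpos
    have hz₀Int : z₀ ∈ Int := hroots z₀ hz₀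
    set m := D.rootMultiplicity z₀ with hm
    obtain ⟨E, hDE, hEnd⟩ := D.exists_eq_pow_rootMultiplicity_mul_and_not_dvd hD0 z₀
    have hEz₀ : E.eval z₀ ≠ 0 := fun h => hEnd (dvd_iff_isRoot.mpr h)
    have hE0 : E ≠ 0 := fun h => hEz₀ (by simp [h])
    have hlcE : E.leadingCoeff ≠ 0 := leadingCoeff_ne_zero.mpr hE0
    have hm1 : 1 ≤ m := (rootMultiplicity_pos hD0).mpr hz₀
    have hDev : ∀ z : ℂ, D.eval z = (z - z₀) ^ m * E.eval z := by
      intro z; rw [hDE]; simp [← hm]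
    have hDcurve : ∀ t, D.eval (γ t) ≠ 0 := fun t h => hcurve t (hroots _ h)
    have hzcurve : ∀ t, γ t - z₀ ≠ 0 :=
      fun t => sub_ne_zero.mpr (fun h => hcurve t (h ▸ hz₀Int))
    have hEcurve : ∀ t, E.eval (γ t) ≠ 0 := by
      intro t h
      exact hDcurve t (by rw [hDev, h, mul_zero])
    -- degree bookkeeping
    have hdm : d = m + E.natDegree := by
      rw [← hDdeg, hDE, natDegree_mul (pow_ne_zero _ (X_sub_C_ne_zero z₀)) hE0,
        natDegree_pow, natDegree_X_sub_C, mul_one]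
    have hdegE : E.degree = (E.natDegree : WithBot ℕ) := degree_eq_natDegree hE0
    -- c and Qt
    set c : ℂ := Q.eval z₀ / E.eval z₀ with hc
    have hQc : (Q - C c * E).eval z₀ = 0 := by
      simp only [eval_sub, eval_mul, eval_C, hc]
      field_simp
      ring
    obtain ⟨Qt, hQt⟩ := (dvd_iff_isRoot (p := Q - C c * E)).mpr hQc
    have hQsplit : Q = (X - C z₀) * Qt + C c * E := by linear_combination hQt
    set Dt : Polynomial ℂ := (X - C z₀) ^ (m - 1) * E with hDt
    have hDt0 : Dt ≠ 0 := mul_ne_zero (pow_ne_zero _ (X_sub_C_ne_zero z₀)) hE0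
    have hDtdeg : Dt.natDegree = d - 1 := by
      rw [hDt, natDegree_mul (pow_ne_zero _ (X_sub_C_ne_zero z₀)) hE0,
        natDegree_pow, natDegree_X_sub_C, mul_one]
      omega
    have hDtev : ∀ z : ℂ, Dt.eval z = (z - z₀) ^ (m - 1) * E.eval z := by
      intro z; rw [hDt]; simp
    have hDtroots : ∀ z : ℂ, Dt.IsRoot z → z ∈ Int := by
      intro z hz
      rw [IsRoot, hDtev] at hz
      rcases mul_eq_zero.mp hz with h | h
      · rcases pow_eq_zero_iff'.mp h with ⟨h1, -⟩
        exact (sub_eq_zero.mp h1) ▸ hz₀Int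
      · exact hroots z (by rw [IsRoot, hDev, h, mul_zero])
    -- degree of Qt
    have hdegElt : E.degree < D.degree := by
      rw [degree_eq_natDegree hD0, hDdeg, hdegE]
      exact_mod_cast by omega
    have hQtdeg : Qt.degree < ((d - 1 : ℕ) : WithBot ℕ) := by
      rcases eq_or_ne Qt 0 with h | h
      · rw [h, degree_zero]; exact bot_lt_iff_ne_bot.mpr (by simp)
      · have h1 : ((X - C z₀) * Qt).degree < D.degree := by
          rw [← hQt]
          refine lt_of_le_of_lt (degree_sub_le _ _) (max_lt hQD ?_)
          refine lt_of_le_of_lt ?_ hdegElt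
          calc (C c * E).degree ≤ (C c).degree + E.degree := degree_mul_le _ _
            _ ≤ 0 + E.degree := add_le_add degree_C_le le_rfl
            _ = E.degree := zero_add _
        rw [degree_mul, degree_X_sub_C, degree_eq_natDegree hD0, hDdeg,
          degree_eq_natDegree h] at h1
        rw [degree_eq_natDegree h]
        have h2 : 1 + Qt.natDegree < d := by exact_mod_cast h1
        exact_mod_cast (by omega : Qt.natDegree < d - 1)
    -- pointwise identity
    have hfeq : (fun t => deriv γ t * Q.eval (γ t) / D.eval (γ t))
        = fun t => c * (deriv γ t / (γ t - z₀) ^ m)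
            + deriv γ t * Qt.eval (γ t) / Dt.eval (γ t) := by
      funext t
      have hpow : (γ t - z₀) ^ m = (γ t - z₀) ^ (m - 1) * (γ t - z₀) := by
        rw [← pow_succ]
        congr 1
        omega
      rw [hDev, hDtev, hQsplit]
      simp only [eval_add, eval_mul, eval_sub, eval_X, eval_C]
      rw [hpow]
      set u := γ t - z₀ with hu
      have hu0 : u ≠ 0 := hzcurve t
      have hp0 : u ^ (m - 1) ≠ 0 := pow_ne_zero _ hu0
      have he0 : eval (γ t) E ≠ 0 := hEcurve t
      field_simp
      ring
    -- continuity facts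
    have hcγ : Continuous γ := hγ.continuous
    have hcont1 : Continuous fun t => deriv γ t / (γ t - z₀) ^ m :=
      hγ'.div ((hcγ.sub continuous_const).pow m) (fun t => pow_ne_zero _ (hzcurve t))
    have hDtcurve : ∀ t, Dt.eval (γ t) ≠ 0 := by
      intro t
      rw [hDtev]
      exact mul_ne_zero (pow_ne_zero _ (hzcurve t)) (hEcurve t)
    have hcont2 : Continuous fun t => deriv γ t * Qt.eval (γ t) / Dt.eval (γ t) :=
      (hγ'.mul (Qt.continuous_aeval.comp hcγ)).div
        (Dt.continuous_aeval.comp hcγ) hDtcurve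
    rw [hfeq, intervalIntegral.integral_add (f := fun t => c * (deriv γ t / (γ t - z₀) ^ m))
        ((continuous_const.mul hcont1).intervalIntegrable _ _) (hcont2.intervalIntegrable _ _),
      intervalIntegral.integral_const_mul]
    -- the pole integral
    have hpole : ∫ t in (0:ℝ)..(2 * Real.pi), deriv γ t / (γ t - z₀) ^ m
        = if m = 1 then 2 * Real.pi * Complex.I else 0 := by
      rcases eq_or_ne m 1 with h | h
      · rw [if_pos h, h]
        have hw := hwind1 z₀ hz₀Int
        have h2πi : (2 * (Real.pi:ℂ) * Complex.I) ≠ 0 := by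
          simp [Real.pi_ne_zero, Complex.I_ne_zero]
        field_simp at hw
        simpa [pow_one] using hw
      · rw [if_neg h]
        have hm2 : m = (m - 1) + 1 := by omega
        rw [hm2]
        exact pole_integral_zero γ hγ hγ' hclosed z₀
          (fun t => sub_ne_zero.mp (hzcurve t) |> fun hh => hh)
          (m - 1) (by omega)
    -- induction hypothesis
    have hQtdeg' : Qt.degree < Dt.degree := by
      rwa [degree_eq_natDegree hDt0, hDtdeg]
    have hIH := ih (d - 1) (by omega) Dt Qt hDt0 hDtdeg hDtroots hQtdeg'
    rw [hIH, hpole]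
    -- leading coefficients
    have hlcD : D.leadingCoeff = E.leadingCoeff := by
      rw [hDE, leadingCoeff_mul, ((monic_X_sub_C z₀).pow _).leadingCoeff, one_mul]
    have hlcDt : Dt.leadingCoeff = E.leadingCoeff := by
      rw [hDt, leadingCoeff_mul, ((monic_X_sub_C z₀).pow _).leadingCoeff, one_mul]
    -- coefficient computation
    have hQtc0 : Qt.coeff (d - 1) = 0 := coeff_eq_zero_of_degree_lt hQtdeg
    have hXQt : ((X - C z₀) * Qt).coeff (d - 1) = Qt.coeff (d - 1 - 1) := by
      rw [sub_mul, coeff_sub, coeff_C_mul, hQtc0, mul_zero, sub_zero]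
      rcases Nat.lt_or_ge d 2 with h | h
      · have hd1' : d = 1 := by omega
        have hQt0 : Qt = 0 := by
          subst hd1'
          exact degree_eq_bot.mp (Nat.WithBot.lt_zero_iff.mp (by exact_mod_cast hQtdeg))
        simp [hQt0]
      · have : d - 1 = (d - 1 - 1) + 1 := by omega
        rw [this, coeff_X_mul]
        congr 1
    have hcoeffQ : Q.coeff (d - 1) = Qt.coeff (d - 1 - 1) + c * E.coeff (d - 1) := by
      rw [hQsplit, coeff_add, hXQt, coeff_C_mul]
    rcases eq_or_ne m 1 with hm' | hm'
    · have hEdeg : E.natDegree = d - 1 := by omega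
      have hEc : E.coeff (d - 1) = E.leadingCoeff := by
        rw [← hEdeg]; rfl
      rw [if_pos hm', hcoeffQ, hEc, hlcD, hlcDt]
      have hd2 : d - 1 - 1 = d - 1 - 1 := rfl
      field_simp
      ring
    · have hEc : E.coeff (d - 1) = 0 :=
        coeff_eq_zero_of_natDegree_lt (by omega)
      rw [if_neg hm', hcoeffQ, hEc, hlcD, hlcDt]
      ring

/-- Backward norm estimate: in the setting of the coefficient integral representation
(curve `L_R` enclosing `0`, `c₂√n Rⁿ ≤ |B_n| ≤ c₁√n Rⁿ` on the curve, zeros of `B_n`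
eventually inside, `P_n = ∑_{k ≤ n} a_k B_k`), one has
`‖P_{n-1}‖_{L_R} ≤ C ‖P_n‖_{L_R}` for all large `n`, where
`C = 1 + (|L_R|/(2π d))(c₁/c₂)`; consequently `‖P_{n-k}‖_{L_R} ≤ C^k ‖P_n‖_{L_R}`. -/
theorem backward_norm_estimate
    (a : ℕ → ℂ) (B : ℕ → Polynomial ℂ) (P : ℕ → Polynomial ℂ)
    (hP : ∀ n, P n = ∑ k ∈ Finset.range (n + 1), Polynomial.C (a k) * B k)
    (hdeg : ∀ n, (B n).natDegree = n)
    (γ : ℝ → ℂ) (hγ : Differentiable ℝ γ) (hγ' : Continuous (deriv γ))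
    (hclosed : γ 0 = γ (2 * Real.pi))
    (Int : Set ℂ) (hInt0 : (0 : ℂ) ∈ Int)
    (hcurve : ∀ t : ℝ, γ t ∉ Int)
    (hwind1 : ∀ z ∈ Int,
      (1 / (2 * Real.pi * Complex.I)) *
        ∫ t in (0:ℝ)..(2 * Real.pi), deriv γ t / (γ t - z) = 1)
    (hwind0 : ∀ z : ℂ, z ∉ Int → z ∉ Set.range γ →
      (1 / (2 * Real.pi * Complex.I)) *
        ∫ t in (0:ℝ)..(2 * Real.pi), deriv γ t / (γ t - z) = 0)
    (R c₁ c₂ : ℝ) (hR : 1 < R) (hc₂ : 0 < c₂) (hc₁₂ : c₂ ≤ c₁)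
    (hlow : ∀ (n : ℕ) (t : ℝ),
      c₂ * Real.sqrt n * R ^ n ≤ ‖(B n).eval (γ t)‖)
    (hup : ∀ (n : ℕ) (t : ℝ),
      ‖(B n).eval (γ t)‖ ≤ c₁ * Real.sqrt n * R ^ n)
    (hzeros : ∀ᶠ n in atTop, ∀ z : ℂ, (B n).IsRoot z → z ∈ Int) :
    ∃ N : ℕ,
      (∀ n ≥ N,
        sSup ((fun t => ‖(P (n - 1)).eval (γ t)‖) '' Set.Icc (0:ℝ) (2 * Real.pi)) ≤
          (1 + ((∫ t in (0:ℝ)..(2 * Real.pi), ‖deriv γ t‖) /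
              (2 * Real.pi * sInf ((fun t => ‖γ t‖) '' Set.Icc (0:ℝ) (2 * Real.pi)))) *
            (c₁ / c₂)) *
          sSup ((fun t => ‖(P n).eval (γ t)‖) '' Set.Icc (0:ℝ) (2 * Real.pi))) ∧
      (∀ n : ℕ, ∀ k ≤ n, N ≤ n - k →
        sSup ((fun t => ‖(P (n - k)).eval (γ t)‖) '' Set.Icc (0:ℝ) (2 * Real.pi)) ≤
          (1 + ((∫ t in (0:ℝ)..(2 * Real.pi), ‖deriv γ t‖) /
              (2 * Real.pi * sInf ((fun t => ‖γ t‖) '' Set.Icc (0:ℝ) (2 * Real.pi)))) *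
            (c₁ / c₂)) ^ k *
          sSup ((fun t => ‖(P n).eval (γ t)‖) '' Set.Icc (0:ℝ) (2 * Real.pi))) := by
  obtain ⟨N₀, hN₀⟩ := eventually_atTop.mp hzeros
  have hcγ : Continuous γ := hγ.continuous
  have hIccne : (Set.Icc (0:ℝ) (2 * Real.pi)).Nonempty :=
    Set.nonempty_Icc.mpr (le_of_lt Real.two_pi_pos)
  set L : ℝ := ∫ t in (0:ℝ)..(2 * Real.pi), ‖deriv γ t‖ with hL
  set dd : ℝ := sInf ((fun t => ‖γ t‖) '' Set.Icc (0:ℝ) (2 * Real.pi)) with hdd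
  set M : ℕ → ℝ := fun n =>
    sSup ((fun t => ‖(P n).eval (γ t)‖) '' Set.Icc (0:ℝ) (2 * Real.pi)) with hM
  set Cst : ℝ := 1 + (L / (2 * Real.pi * dd)) * (c₁ / c₂) with hCst
  -- basic facts
  have hγne : ∀ t : ℝ, γ t ≠ 0 := by
    intro t h
    exact hcurve t (h ▸ hInt0)
  have hddpos : 0 < dd := by
    have hcompact : IsCompact ((fun t => ‖γ t‖) '' Set.Icc (0:ℝ) (2 * Real.pi)) :=
      isCompact_Icc.image hcγ.norm
    obtain ⟨t₀, _, ht₀⟩ := hcompact.sInf_mem (hIccne.image _)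
    rw [hdd, ← ht₀]
    exact norm_pos_iff.mpr (hγne t₀)
  have hddle : ∀ t ∈ Set.Icc (0:ℝ) (2 * Real.pi), dd ≤ ‖γ t‖ := by
    intro t ht
    exact csInf_le (isCompact_Icc.image hcγ.norm).bddBelow
      (Set.mem_image_of_mem _ ht)
  have hLnn : 0 ≤ L :=
    intervalIntegral.integral_nonneg (le_of_lt Real.two_pi_pos) (fun t _ => norm_nonneg _)
  have hMle : ∀ n, ∀ t ∈ Set.Icc (0:ℝ) (2 * Real.pi),
      ‖(P n).eval (γ t)‖ ≤ M n := by
    intro n t ht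
    exact le_csSup (isCompact_Icc.image
      ((P n).continuous_aeval.comp hcγ).norm).bddAbove
      (Set.mem_image_of_mem _ ht)
  have hMnn : ∀ n, 0 ≤ M n := by
    intro n
    obtain ⟨t, ht⟩ := hIccne
    exact le_trans (norm_nonneg _) (hMle n t ht)
  have hCst1 : (1:ℝ) ≤ Cst := by
    rw [hCst]
    have h1 : 0 ≤ L / (2 * Real.pi * dd) := div_nonneg hLnn (mul_nonneg (by positivity) hddpos.le)
    have h2 : 0 ≤ c₁ / c₂ := div_nonneg (by linarith) hc₂.le
    nlinarith
  have hCstnn : (0:ℝ) ≤ Cst := le_trans zero_le_one hCst1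
  -- the key step
  have hstep : ∀ n : ℕ, max N₀ 1 ≤ n → M (n - 1) ≤ Cst * M n := by
    intro n hn
    have hn1 : 1 ≤ n := le_trans (le_max_right _ _) hn
    have hnN₀ : N₀ ≤ n := le_trans (le_max_left _ _) hn
    set sn : ℝ := Real.sqrt n with hsn
    have hsnpos : 0 < sn := Real.sqrt_pos.mpr (by exact_mod_cast hn1)
    have hRnpos : 0 < R ^ n := pow_pos (lt_trans one_pos hR) n
    have hlowpos : 0 < c₂ * sn * R ^ n := by positivity
    have hBn0 : B n ≠ 0 := by
      intro h
      have := hlow n 0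
      rw [h] at this
      simp only [Polynomial.eval_zero, norm_zero] at this
      linarith
    have hBncurve : ∀ t : ℝ, (B n).eval (γ t) ≠ 0 := by
      intro t h
      have := hlow n t
      rw [h, norm_zero] at this
      linarith
    have hlcBn : (B n).leadingCoeff ≠ 0 := leadingCoeff_ne_zero.mpr hBn0
    set D : Polynomial ℂ := X * B n with hD
    have hD0 : D ≠ 0 := mul_ne_zero X_ne_zero hBn0
    have hDdeg : D.natDegree = n + 1 := by
      rw [hD, natDegree_mul X_ne_zero hBn0, natDegree_X, hdeg n]
      omega
    have hDroots : ∀ z : ℂ, D.IsRoot z → z ∈ Int := by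
      intro z hz
      rw [IsRoot, hD, eval_mul, eval_X] at hz
      rcases mul_eq_zero.mp hz with h | h
      · exact h ▸ hInt0
      · exact hN₀ n hnN₀ z h
    have hdegPn : (P n).degree ≤ (n : WithBot ℕ) := by
      rw [hP n]
      refine le_trans (degree_sum_le _ _) (Finset.sup_le ?_)
      intro k hk
      have hk' : k ≤ n := by
        have := Finset.mem_range.mp hk
        omega
      calc (C (a k) * B k).degree ≤ (C (a k)).degree + (B k).degree := degree_mul_le _ _
        _ ≤ 0 + (B k).degree := add_le_add degree_C_le le_rfl
        _ = (B k).degree := zero_add _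
        _ ≤ ((B k).natDegree : WithBot ℕ) := degree_le_natDegree
        _ ≤ (n : WithBot ℕ) := by
            rw [hdeg k]
            exact_mod_cast hk'
    have hdegPD : (P n).degree < D.degree := by
      rw [degree_eq_natDegree hD0, hDdeg]
      refine lt_of_le_of_lt hdegPn ?_
      exact_mod_cast Nat.lt_succ_self n
    have hI := resid_integral γ hγ hγ' hclosed Int hcurve hwind1 (n + 1) D (P n)
      hD0 hDdeg hDroots hdegPD
    -- coefficient computation
    have hcoeff : (P n).coeff n = a n * (B n).leadingCoeff := by
      rw [hP n, finset_sum_coeff, Finset.sum_range_succ]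
      have h0 : ∀ k ∈ Finset.range n, (C (a k) * B k).coeff n = 0 := by
        intro k hk
        rw [coeff_C_mul]
        rw [coeff_eq_zero_of_natDegree_lt (by rw [hdeg k]; exact Finset.mem_range.mp hk),
          mul_zero]
      rw [Finset.sum_eq_zero h0, zero_add, coeff_C_mul, Polynomial.leadingCoeff, hdeg n]
    have hlcD : D.leadingCoeff = (B n).leadingCoeff := by
      rw [hD, leadingCoeff_mul, leadingCoeff_X, one_mul]
    have hIval : (∫ t in (0:ℝ)..(2 * Real.pi), deriv γ t * (P n).eval (γ t) / D.eval (γ t))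
        = (2 * Real.pi * Complex.I) * a n := by
      rw [hI]
      congr 1
      rw [Nat.add_sub_cancel, hcoeff, hlcD, mul_div_assoc, div_self hlcBn, mul_one]
    -- bound on the integral
    have hintcont : Continuous fun t => deriv γ t * (P n).eval (γ t) / D.eval (γ t) := by
      refine (hγ'.mul ((P n).continuous_aeval.comp hcγ)).div
        (D.continuous_aeval.comp hcγ) ?_
      intro t
      rw [hD]
      simp only [eval_mul, eval_X]
      exact mul_ne_zero (hγne t) (hBncurve t)
    set K : ℝ := M n / (dd * (c₂ * sn * R ^ n)) with hK
    have hIbound : ‖(2 * Real.pi * Complex.I) * a n‖ ≤ L * K := by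
      rw [← hIval]
      calc ‖∫ t in (0:ℝ)..(2 * Real.pi), deriv γ t * (P n).eval (γ t) / D.eval (γ t)‖
          ≤ ∫ t in (0:ℝ)..(2 * Real.pi), ‖deriv γ t * (P n).eval (γ t) / D.eval (γ t)‖ := by
            exact intervalIntegral.norm_integral_le_integral_norm (le_of_lt Real.two_pi_pos)
        _ ≤ ∫ t in (0:ℝ)..(2 * Real.pi), ‖deriv γ t‖ * K := by
            refine intervalIntegral.integral_mono_on (le_of_lt Real.two_pi_pos)
              (hintcont.norm.intervalIntegrable _ _)
              ((hγ'.norm.mul continuous_const).intervalIntegrable _ _) ?_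
            intro t ht
            rw [norm_div, norm_mul]
            have h1 : ‖((P n).eval (γ t))‖ / ‖D.eval (γ t)‖ ≤ K := by
              rw [hK, hD]
              simp only [eval_mul, eval_X, norm_mul]
              refine div_le_div₀ (hMnn n) (hMle n t ht) (mul_pos hddpos hlowpos) ?_
              exact mul_le_mul (hddle t ht) (hlow n t) (le_of_lt hlowpos)
                (norm_nonneg _)
            calc ‖deriv γ t‖ * ‖(P n).eval (γ t)‖ / ‖D.eval (γ t)‖
                = ‖deriv γ t‖ * (‖(P n).eval (γ t)‖ / ‖D.eval (γ t)‖) := by ring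
              _ ≤ ‖deriv γ t‖ * K := mul_le_mul_of_nonneg_left h1 (norm_nonneg _)
        _ = L * K := by rw [intervalIntegral.integral_mul_const]
    have habsa : 2 * Real.pi * ‖a n‖ ≤ L * K := by
      refine le_trans (le_of_eq ?_) hIbound
      simp [norm_mul, abs_of_pos Real.pi_pos]
    -- bound |a n| * c₁ sn Rⁿ
    have hkey : ‖a n‖ * (c₁ * sn * R ^ n) ≤ (L / (2 * Real.pi * dd)) * (c₁ / c₂) * M n := by
      have h2π : (0:ℝ) < 2 * Real.pi := Real.two_pi_pos
      have ha : ‖a n‖ ≤ L * K / (2 * Real.pi) := by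
        rw [le_div_iff₀ h2π]
        linarith [habsa]
      calc ‖a n‖ * (c₁ * sn * R ^ n)
          ≤ (L * K / (2 * Real.pi)) * (c₁ * sn * R ^ n) :=
            mul_le_mul_of_nonneg_right ha
              (mul_nonneg (mul_nonneg (by linarith) hsnpos.le) hRnpos.le)
        _ = (L / (2 * Real.pi * dd)) * (c₁ / c₂) * M n := by
            rw [hK]
            field_simp
    -- P (n-1) = P n - C (a n) * B n
    have hn1' : n - 1 + 1 = n := by omega
    have hPsplit : P n = P (n - 1) + C (a n) * B n := by
      have h1 := hP (n - 1)
      rw [hn1'] at h1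
      rw [hP n, Finset.sum_range_succ, ← h1]
    have hptbound : ∀ t ∈ Set.Icc (0:ℝ) (2 * Real.pi),
        ‖(P (n - 1)).eval (γ t)‖ ≤ Cst * M n := by
      intro t ht
      have heval : (P (n - 1)).eval (γ t) = (P n).eval (γ t) - a n * (B n).eval (γ t) := by
        rw [hPsplit]
        simp only [eval_add, eval_mul, eval_C]
        ring
      rw [heval]
      calc ‖(P n).eval (γ t) - a n * (B n).eval (γ t)‖
          ≤ ‖(P n).eval (γ t)‖ + ‖a n * (B n).eval (γ t)‖ := by
            exact (norm_sub_le _ _)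
        _ ≤ M n + ‖a n‖ * (c₁ * sn * R ^ n) := by
            rw [norm_mul]
            exact add_le_add (hMle n t ht)
              (mul_le_mul_of_nonneg_left (hup n t) (norm_nonneg _))
        _ ≤ M n + (L / (2 * Real.pi * dd)) * (c₁ / c₂) * M n := add_le_add le_rfl hkey
        _ = Cst * M n := by rw [hCst]; ring
    exact csSup_le (hIccne.image _) (by rintro x ⟨t, ht, rfl⟩; exact hptbound t ht)
  -- assemble
  refine ⟨max N₀ 1, fun n hn => hstep n hn, ?_⟩
  intro n k hk hNk
  induction k with
  | zero => simp
  | succ k ihk =>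
    have hk' : k ≤ n := by omega
    have hNk' : max N₀ 1 ≤ n - k := le_trans hNk (by omega)
    have h1 : M (n - (k + 1)) ≤ Cst * M (n - k) := by
      have := hstep (n - k) hNk'
      rwa [show n - k - 1 = n - (k + 1) by omega] at this
    calc M (n - (k + 1)) ≤ Cst * M (n - k) := h1
      _ ≤ Cst * (Cst ^ k * M n) := mul_le_mul_of_nonneg_left (ihk hk' (le_trans hNk (by omega))) hCstnn
      _ = Cst ^ (k + 1) * M n := by ring
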